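/- For any real constants a, c, and k_d, the function v(r,t) = exp(−k_d·t)·exp(a·(r−c) + a²·t)·erfc((r−c)/(2√t) + a·√t)/r satisfies ∂v/∂t(r,t) = ∂²v/∂r²(r,t) + (2/r)·∂v/∂r(r,t) − k_d·v(r,t) for all r > 0 and t > 0. -/

import Mathlib

open Real MeasureTheory


/-- The complementary error function `erfc(x) = (2/√π)·∫_x^∞ exp(−u²) du`. -/
noncomputable def erfc (x : ℝ) : ℝ :=
  (2 / Real.sqrt Real.pi) * ∫ u in Set.Ioi x, Real.exp (-u ^ 2)

noncomputable def erfc' (x : ℝ) : ℝ := -(2 / Real.sqrt Real.pi) * Real.exp (-x ^ 2)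

lemma integrable_gauss : Integrable (fun u : ℝ => Real.exp (-u ^ 2)) := by
  have := integrable_exp_neg_mul_sq (b := 1) one_pos
  simpa using this

lemma erfc_hasDerivAt (x : ℝ) : HasDerivAt erfc (erfc' x) x := by
  have hfun : ∀ y : ℝ, erfc y =
      (2 / Real.sqrt Real.pi) * ((∫ u : ℝ, Real.exp (-u ^ 2))
        - (∫ u in Set.Iic (0:ℝ), Real.exp (-u ^ 2))
        - ∫ u in (0:ℝ)..y, Real.exp (-u ^ 2)) := by
    intro y
    have h1 := intervalIntegral.integral_Iic_add_Ioi (b := y)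
      (f := fun u : ℝ => Real.exp (-u ^ 2)) (μ := volume)
      integrable_gauss.integrableOn integrable_gauss.integrableOn
    have h2 := intervalIntegral.integral_Iic_sub_Iic (a := (0:ℝ)) (b := y)
      (f := fun u : ℝ => Real.exp (-u ^ 2)) (μ := volume)
      integrable_gauss.integrableOn integrable_gauss.integrableOn
    unfold erfc
    rw [← h1, ← h2]
    ring
  have hd : HasDerivAt (fun y => ∫ u in (0:ℝ)..y, Real.exp (-u ^ 2))
      (Real.exp (-x ^ 2)) x := by
    exact intervalIntegral.integral_hasDerivAt_right
      integrable_gauss.intervalIntegrable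
      ((Real.continuous_exp.comp (by continuity)).stronglyMeasurableAtFilter _ _)
      (Real.continuous_exp.comp (by continuity)).continuousAt
  have h2 : HasDerivAt (fun y => (2 / Real.sqrt Real.pi) *
      ((∫ u : ℝ, Real.exp (-u ^ 2)) - (∫ u in Set.Iic (0:ℝ), Real.exp (-u ^ 2))
        - ∫ u in (0:ℝ)..y, Real.exp (-u ^ 2)))
      (erfc' x) x := by
    have := (((hasDerivAt_const x ((∫ u : ℝ, Real.exp (-u ^ 2))
        - (∫ u in Set.Iic (0:ℝ), Real.exp (-u ^ 2)))).sub hd).const_mul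
        (2 / Real.sqrt Real.pi))
    convert this using 1
    · rfl
    · rfl
    · rfl
    unfold erfc'; ring
  have he : erfc = fun y => (2 / Real.sqrt Real.pi) *
      ((∫ u : ℝ, Real.exp (-u ^ 2)) - (∫ u in Set.Iic (0:ℝ), Real.exp (-u ^ 2))
        - ∫ u in (0:ℝ)..y, Real.exp (-u ^ 2)) := funext hfun
  rw [he]; exact h2

lemma erfc'_hasDerivAt (x : ℝ) : HasDerivAt erfc' (-2 * x * erfc' x) x := by
  have h1 : HasDerivAt (fun y : ℝ => -y ^ 2) (-(2 * x)) x := by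
    simpa using (hasDerivAt_pow 2 x).fun_neg
  have h2 := (h1.exp).const_mul (-(2 / Real.sqrt Real.pi))
  convert h2 using 1
  · rfl
  · rfl
  · rfl
  unfold erfc'; ring

noncomputable def eS (a c r t : ℝ) : ℝ := (r - c) / (2 * Real.sqrt t) + a * Real.sqrt t

noncomputable def Pf (a c k_d r t : ℝ) : ℝ :=
  Real.exp (-k_d * t) * Real.exp (a * (r - c) + a ^ 2 * t) * erfc (eS a c r t)

noncomputable def Pf1 (a c k_d r t : ℝ) : ℝ :=
  Real.exp (-k_d * t) * Real.exp (a * (r - c) + a ^ 2 * t) *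
    (a * erfc (eS a c r t) + erfc' (eS a c r t) / (2 * Real.sqrt t))

noncomputable def Pf2 (a c k_d r t : ℝ) : ℝ :=
  Real.exp (-k_d * t) * Real.exp (a * (r - c) + a ^ 2 * t) *
    (a ^ 2 * erfc (eS a c r t) + a * erfc' (eS a c r t) / Real.sqrt t
      - eS a c r t * erfc' (eS a c r t) / (2 * t))

section derivs
variable (a c k_d : ℝ) {r t : ℝ}

lemma hS_r : HasDerivAt (fun r' => eS a c r' t) (1 / (2 * Real.sqrt t)) r := by
  unfold eS
  exact (((hasDerivAt_id r).sub_const c).div_const (2 * Real.sqrt t)).add_const _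

lemma hS_t (ht : 0 < t) :
    HasDerivAt (fun t' => eS a c r t')
      (-(r - c) / (4 * t * Real.sqrt t) + a / (2 * Real.sqrt t)) t := by
  have hsqrt : HasDerivAt Real.sqrt (1 / (2 * Real.sqrt t)) t := Real.hasDerivAt_sqrt ht.ne'
  have h1 : HasDerivAt (fun t' : ℝ => (r - c) / (2 * Real.sqrt t'))
      ((0 * (2 * Real.sqrt t) - (r - c) * (2 * (1 / (2 * Real.sqrt t)))) / (2 * Real.sqrt t) ^ 2) t :=
    (hasDerivAt_const t (r - c)).div (hsqrt.const_mul 2)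
      (by positivity)
  have h2 := h1.add (hsqrt.const_mul a)
  unfold eS
  convert h2 using 1
  · rfl
  · rfl
  · rfl
  set s := Real.sqrt t with hsdef
  have hs0 : 0 < s := Real.sqrt_pos.2 ht
  have hts : t = s * s := (Real.mul_self_sqrt ht.le).symm
  rw [hts]
  field_simp
  ring

lemma hP_r (ht : 0 < t) :
    HasDerivAt (fun r' => Pf a c k_d r' t) (Pf1 a c k_d r t) r := by
  have hA : HasDerivAt (fun r' => Real.exp (a * (r' - c) + a ^ 2 * t))
      (a * Real.exp (a * (r - c) + a ^ 2 * t)) r := by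
    have : HasDerivAt (fun r' : ℝ => a * (r' - c) + a ^ 2 * t) a r := by
      simpa using (((hasDerivAt_id r).sub_const c).const_mul a).add_const (a ^ 2 * t)
    simpa [mul_comm] using this.exp
  have hG : HasDerivAt (fun r' => erfc (eS a c r' t))
      (erfc' (eS a c r t) * (1 / (2 * Real.sqrt t))) r :=
    (erfc_hasDerivAt _).comp r (hS_r a c)
  have h := ((hasDerivAt_const r (Real.exp (-k_d * t))).mul hA).mul hG
  unfold Pf Pf1
  convert h using 1
  · rfl
  · rfl
  · rfl
  simp only [Pi.mul_apply]
  set s := Real.sqrt t with hsdef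
  have hs0 : 0 < s := Real.sqrt_pos.2 ht
  field_simp
  ring

lemma hP1_r (ht : 0 < t) :
    HasDerivAt (fun r' => Pf1 a c k_d r' t) (Pf2 a c k_d r t) r := by
  have hA : HasDerivAt (fun r' => Real.exp (a * (r' - c) + a ^ 2 * t))
      (a * Real.exp (a * (r - c) + a ^ 2 * t)) r := by
    have : HasDerivAt (fun r' : ℝ => a * (r' - c) + a ^ 2 * t) a r := by
      simpa using (((hasDerivAt_id r).sub_const c).const_mul a).add_const (a ^ 2 * t)
    simpa [mul_comm] using this.exp
  have hG : HasDerivAt (fun r' => erfc (eS a c r' t))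
      (erfc' (eS a c r t) * (1 / (2 * Real.sqrt t))) r :=
    (erfc_hasDerivAt _).comp r (hS_r a c)
  have hG' : HasDerivAt (fun r' => erfc' (eS a c r' t))
      ((-2 * eS a c r t * erfc' (eS a c r t)) * (1 / (2 * Real.sqrt t))) r :=
    (erfc'_hasDerivAt _).comp r (hS_r a c)
  have hB : HasDerivAt
      (fun r' => a * erfc (eS a c r' t) + erfc' (eS a c r' t) / (2 * Real.sqrt t))
      (a * (erfc' (eS a c r t) * (1 / (2 * Real.sqrt t)))
        + (-2 * eS a c r t * erfc' (eS a c r t)) * (1 / (2 * Real.sqrt t)) / (2 * Real.sqrt t)) r :=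
    (hG.const_mul a).add (hG'.div_const _)
  have h := ((hasDerivAt_const r (Real.exp (-k_d * t))).mul hA).mul hB
  unfold Pf1 Pf2
  convert h using 1
  · rfl
  · rfl
  · rfl
  simp only [Pi.mul_apply]
  set s := Real.sqrt t with hsdef
  have hs0 : 0 < s := Real.sqrt_pos.2 ht
  have hts : t = s * s := (Real.mul_self_sqrt ht.le).symm
  rw [hts]
  field_simp
  ring

lemma hP_t (ht : 0 < t) :
    HasDerivAt (fun t' => Pf a c k_d r t')
      (Pf2 a c k_d r t - k_d * Pf a c k_d r t) t := by
  have hE : HasDerivAt (fun t' => Real.exp (-k_d * t'))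
      (-k_d * Real.exp (-k_d * t)) t := by
    have : HasDerivAt (fun t' : ℝ => -k_d * t') (-k_d) t := by
      simpa using (hasDerivAt_id t).const_mul (-k_d)
    simpa [mul_comm] using this.exp
  have hA : HasDerivAt (fun t' => Real.exp (a * (r - c) + a ^ 2 * t'))
      (a ^ 2 * Real.exp (a * (r - c) + a ^ 2 * t)) t := by
    have : HasDerivAt (fun t' : ℝ => a * (r - c) + a ^ 2 * t') (a ^ 2) t := by
      simpa using ((hasDerivAt_id t).const_mul (a ^ 2)).const_add (a * (r - c))
    simpa [mul_comm] using this.exp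
  have hG : HasDerivAt (fun t' => erfc (eS a c r t'))
      (erfc' (eS a c r t) * (-(r - c) / (4 * t * Real.sqrt t) + a / (2 * Real.sqrt t))) t :=
    (erfc_hasDerivAt _).comp t (hS_t a c ht)
  have h := (hE.mul hA).mul hG
  unfold Pf Pf2
  convert h using 1
  · rfl
  · rfl
  · rfl
  simp only [Pi.mul_apply]
  have hSval : eS a c r t = (r - c) / (2 * Real.sqrt t) + a * Real.sqrt t := rfl
  rw [hSval]
  set s := Real.sqrt t with hsdef
  have hs0 : 0 < s := Real.sqrt_pos.2 ht
  have hts : t = s * s := (Real.mul_self_sqrt ht.le).symm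
  rw [hts]
  field_simp
  ring

end derivs

/-- The W-type term of the Green's function:
`v(r,t) = exp(−k_d·t)·exp(a·(r−c) + a²·t)·erfc((r−c)/(2√t) + a·√t)/r`. -/
noncomputable def wTerm (a c k_d : ℝ) (r t : ℝ) : ℝ :=
  Real.exp (-k_d * t) * Real.exp (a * (r - c) + a ^ 2 * t)
    * erfc ((r - c) / (2 * Real.sqrt t) + a * Real.sqrt t) / r

/-- For any real constants `a`, `c`, `k_d`, the function
`v(r,t) = exp(−k_d·t)·exp(a·(r−c) + a²·t)·erfc((r−c)/(2√t) + a·√t)/r` satisfies the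
dimensionless radial reaction–diffusion equation
`∂v/∂t = ∂²v/∂r² + (2/r)·∂v/∂r − k_d·v` for all `r > 0`, `t > 0`. -/
theorem wTerm_satisfies_radial_reaction_diffusion (a c k_d : ℝ) :
    ∀ r t : ℝ, 0 < r → 0 < t →
      deriv (fun t' : ℝ => wTerm a c k_d r t') t
        = deriv (fun r' : ℝ => deriv (fun r'' : ℝ => wTerm a c k_d r'' t) r') r
          + (2 / r) * deriv (fun r' : ℝ => wTerm a c k_d r' t) r
          - k_d * wTerm a c k_d r t := by
  intro r t hr ht
  have hrne : r ≠ 0 := hr.ne'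
  have hw : wTerm a c k_d r t = Pf a c k_d r t / r := rfl
  have hwt : HasDerivAt (fun t' => wTerm a c k_d r t')
      ((Pf2 a c k_d r t - k_d * Pf a c k_d r t) / r) t := (hP_t a c k_d ht).div_const r
  have hw1 : ∀ r' : ℝ, r' ≠ 0 → HasDerivAt (fun r'' => wTerm a c k_d r'' t)
      ((Pf1 a c k_d r' t * r' - Pf a c k_d r' t * 1) / r' ^ 2) r' := fun r' hr' =>
    (hP_r a c k_d ht).div (hasDerivAt_id r') hr'
  have heq : (fun r' => deriv (fun r'' => wTerm a c k_d r'' t) r')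
      =ᶠ[nhds r] (fun r' => (Pf1 a c k_d r' t * r' - Pf a c k_d r' t * 1) / r' ^ 2) := by
    filter_upwards [eventually_ne_nhds hrne] with r' hr'
    exact (hw1 r' hr').deriv
  have hnum : HasDerivAt (fun r' => Pf1 a c k_d r' t * r' - Pf a c k_d r' t * 1)
      ((Pf2 a c k_d r t * r + Pf1 a c k_d r t * 1) - Pf1 a c k_d r t * 1) r :=
    ((hP1_r a c k_d ht).mul (hasDerivAt_id r)).sub ((hP_r a c k_d ht).mul_const 1)
  have h2 : HasDerivAt (fun r' => (Pf1 a c k_d r' t * r' - Pf a c k_d r' t * 1) / r' ^ 2)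
      (((Pf2 a c k_d r t * r + Pf1 a c k_d r t * 1 - Pf1 a c k_d r t * 1) * r ^ 2
          - (Pf1 a c k_d r t * r - Pf a c k_d r t * 1) * (2 * r ^ 1)) / (r ^ 2) ^ 2) r :=
    hnum.div (hasDerivAt_pow 2 r) (pow_ne_zero 2 hrne)
  rw [hwt.deriv, heq.deriv_eq, h2.deriv, (hw1 r hrne).deriv, hw]
  field_simp
  ring
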